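/- Let d, k, N, b ∈ N with b ≥ 1, let M > 0, let f : Z^d → Z^{d+1} be Lipschitz with constant M, and let w = (w₁, …, w_{d+1}) ∈ S^d with |w₁| ≥ d^{−1/2}. Let a₂, …, a_{d+1} ∈ Z satisfy |w_l/w₁ − a_l/b| ≤ 1/(bN) for all l ∈ {2, …, d+1}, set ε = 1/(bN), and assume ε < d^{−1/2}/2. Let ℓ : [0,1] → Z^d be a generalized line segment with ε·m_ℓ > 14√d and (f∘ℓ)(0) = 0, satisfying: (z-i) ‖((f∘ℓ)(1) − (f∘ℓ)(0))/‖(f∘ℓ)(1) − (f∘ℓ)(0)‖₂ − w‖₂ < ε, and (z-ii) for every t ∈ [0,1], ‖(f∘ℓ)(t) − [(1−t)(f∘ℓ)(0) + t(f∘ℓ)(1)]‖₂ < ε·M·m_ℓ. Set s = (b, a₂, …, a_{d+1}) ∈ Z^{d+1}, let K_Z = {z ∈ Z^d : min_{t∈[0,1]} ‖z − ℓ(t)‖₂ ≤ ε·m_ℓ}, and let E be the set of lines in R^{d+1} of the form {x − t·s : t ∈ R} for x ∈ f(K_Z). Then there is a constant c₂ > 0 depending only on d and M such that |E| ≤ c₂·m_ℓ^d/(b^{d−1}·N^d).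 -/

import Mathlib

open Set

/-- Euclidean norm on `Fin n → ℝ`. -/
noncomputable def euclNorm {n : ℕ} (x : Fin n → ℝ) : ℝ := Real.sqrt (∑ i, (x i) ^ 2)

/-- Coordinatewise cast of an integer vector to a real vector. -/
def zr {n : ℕ} (x : Fin n → ℤ) : Fin n → ℝ := fun i => (x i : ℝ)

/-- The generalized line segment `t ↦ ⌊(1-t)x + ty⌋` determined by `x, y ∈ ℝ^d`. -/
noncomputable def glSeg {d : ℕ} (x y : Fin d → ℝ) (t : ℝ) : Fin d → ℤ :=
  fun i => ⌊(1 - t) * x i + t * y i⌋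

/-- `m_ℓ = ‖ℓ(1) - ℓ(0)‖₂` for the generalized line segment determined by `x, y`. -/
noncomputable def mseg {d : ℕ} (x y : Fin d → ℝ) : ℝ :=
  euclNorm (zr (glSeg x y 1) - zr (glSeg x y 0))

/-- The discrete cylinder of radius `ρ` around the generalized line segment
determined by `x, y`. -/
def cylZ {d : ℕ} (x y : Fin d → ℝ) (ρ : ℝ) : Set (Fin d → ℤ) :=
  {z | ∃ t ∈ Icc (0 : ℝ) 1, euclNorm (zr z - zr (glSeg x y t)) ≤ ρ}

lemma euclNorm_eq {n : ℕ} (x : Fin n → ℝ) :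
    euclNorm x = ‖(WithLp.equiv 2 (Fin n → ℝ)).symm x‖ := by
  rw [EuclideanSpace.norm_eq]
  simp [euclNorm, Real.norm_eq_abs, sq_abs]

lemma euclNorm_nonneg {n : ℕ} (x : Fin n → ℝ) : 0 ≤ euclNorm x := Real.sqrt_nonneg _

lemma euclNorm_add_le {n : ℕ} (x y : Fin n → ℝ) :
    euclNorm (x + y) ≤ euclNorm x + euclNorm y := by
  simp only [euclNorm_eq]
  have := norm_add_le ((WithLp.equiv 2 (Fin n → ℝ)).symm x) ((WithLp.equiv 2 (Fin n → ℝ)).symm y)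
  simpa using this

lemma euclNorm_coord {n : ℕ} (x : Fin n → ℝ) (i : Fin n) : |x i| ≤ euclNorm x := by
  rw [← Real.sqrt_sq_eq_abs, euclNorm]
  exact Real.sqrt_le_sqrt (Finset.single_le_sum (fun j _ => sq_nonneg (x j)) (Finset.mem_univ i))

lemma pow_algebra (b N C m : ℝ) (d : ℕ) (hd : 0 < d) (hb : b ≠ 0) (hN : N ≠ 0) :
    b * (C * (1 / (b * N) * m)) ^ d = C ^ d * m ^ d / (b ^ (d - 1) * N ^ d) := by
  obtain ⟨e, rfl⟩ : ∃ e, d = e + 1 := ⟨d - 1, (Nat.succ_pred_eq_of_pos hd).symm⟩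
  simp only [Nat.add_sub_cancel]
  rw [eq_div_iff (by positivity)]
  simp only [mul_pow, one_div, inv_pow, pow_succ]
  field_simp

lemma euclNorm_neg {n : ℕ} (x : Fin n → ℝ) : euclNorm (-x) = euclNorm x := by
  simp [euclNorm]

set_option maxHeartbeats 1000000 in
theorem line_cover_cardinality_bound
    (d : ℕ) (hd : 0 < d) (M : ℝ) (hM : 0 < M) :
    ∃ c₂ : ℝ, 0 < c₂ ∧
      ∀ (k N b : ℕ) (_hk : 0 < k), 1 ≤ b →
      ∀ f : (Fin d → ℤ) → (Fin (d + 1) → ℤ),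
        (∀ p q : Fin d → ℤ, euclNorm (zr (f p) - zr (f q)) ≤ M * euclNorm (zr p - zr q)) →
      ∀ w : Fin (d + 1) → ℝ, euclNorm w = 1 → 1 / Real.sqrt d ≤ |w 0| →
      ∀ a : Fin d → ℤ,
        (∀ l : Fin d, |w l.succ / w 0 - (a l : ℝ) / (b : ℝ)| ≤ 1 / ((b : ℝ) * N)) →
        1 / ((b : ℝ) * N) < 1 / (2 * Real.sqrt d) →
      ∀ x y : Fin d → ℝ,
        (1 / ((b : ℝ) * N)) * mseg x y > 14 * Real.sqrt d →
        f (glSeg x y 0) = 0 →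
        -- (z-i)
        euclNorm ((euclNorm (zr (f (glSeg x y 1)) - zr (f (glSeg x y 0))))⁻¹ •
            (zr (f (glSeg x y 1)) - zr (f (glSeg x y 0))) - w) < 1 / ((b : ℝ) * N) →
        -- (z-ii)
        (∀ t ∈ Icc (0 : ℝ) 1,
          euclNorm (zr (f (glSeg x y t)) -
              ((1 - t) • zr (f (glSeg x y 0)) + t • zr (f (glSeg x y 1)))) <
            (1 / ((b : ℝ) * N)) * M * mseg x y) →
        (({L : Set (Fin (d + 1) → ℝ) |
            ∃ z ∈ cylZ x y ((1 / ((b : ℝ) * N)) * mseg x y),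
              L = {p | ∃ t : ℝ,
                p = zr (f z) - t • ((Fin.cons (b : ℝ) (fun l => (a l : ℝ))) : Fin (d + 1) → ℝ)}}.ncard : ℝ) ≤
          c₂ * mseg x y ^ d / ((b : ℝ) ^ (d - 1) * (N : ℝ) ^ d)) := by
  have hsd1 : (1 : ℝ) ≤ Real.sqrt d := by
    rw [show (1:ℝ) = Real.sqrt 1 by simp]
    exact Real.sqrt_le_sqrt (by exact_mod_cast hd)
  have hsd0 : (0 : ℝ) < Real.sqrt d := lt_of_lt_of_le one_pos hsd1
  refine ⟨(18 * Real.sqrt d * M + 1) ^ d, by positivity, ?_⟩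
  intro k N b _hk hb f hf w hw hw0 a ha hεd x y hm h0 hzi hzii
  set ε : ℝ := 1 / ((b : ℝ) * N) with hεdef
  set m : ℝ := mseg x y with hmdef
  -- basic positivity facts
  have hm0' : 0 ≤ m := euclNorm_nonneg _
  have hεm : 14 * Real.sqrt d < ε * m := hm
  have hεm1 : (1 : ℝ) ≤ ε * m := by nlinarith
  have hε0 : 0 < ε := by nlinarith
  have hm0 : 0 < m := by nlinarith
  have hbN : 0 < (b : ℝ) * N := by
    rcases lt_trichotomy ((b:ℝ) * N) 0 with h | h | h
    · exfalso; rw [hεdef] at hε0; have := one_div_nonpos.mpr h.le; linarith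
    · exfalso; rw [hεdef, h] at hε0; simp at hε0
    · exact h
  have hb0 : (0 : ℝ) < b := by exact_mod_cast Nat.lt_of_lt_of_le Nat.zero_lt_one hb
  have hN0 : (0 : ℝ) < N := by nlinarith [Nat.cast_nonneg (α := ℝ) N]
  have hbZ : (0 : ℤ) < (b : ℤ) := by exact_mod_cast Nat.lt_of_lt_of_le Nat.zero_lt_one hb
  have hbne : (b : ℝ) ≠ 0 := ne_of_gt hb0
  have hεhalf : ε ≤ 1 / 2 := by
    have h1 : 1 / (2 * Real.sqrt d) ≤ 1 / 2 := by
      apply div_le_div_of_nonneg_left (by norm_num) (by norm_num)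
      nlinarith
    linarith [hεd]
  have hw0pos : 0 < |w 0| := lt_of_lt_of_le (by positivity) hw0
  have hw0ne : w 0 ≠ 0 := by
    intro h; rw [h] at hw0pos; simp at hw0pos
  have hinvw0 : |w 0|⁻¹ ≤ Real.sqrt d := by
    rw [inv_le_comm₀ hw0pos hsd0]
    simpa [one_div] using hw0
  have hwi : ∀ i, |w i| ≤ 1 := fun i => by
    have := euclNorm_coord w i; rw [hw] at this; exact this
  -- the direction vector and the projection
  set sv : Fin (d + 1) → ℝ := Fin.cons (b : ℝ) (fun l => (a l : ℝ)) with hsv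
  set pr : (Fin (d + 1) → ℝ) → (Fin d → ℝ) :=
    fun A => fun l => A l.succ - A 0 * ((a l : ℝ) / b) with hpr
  -- bounds on a l / b
  have hq : ∀ l : Fin d, |(a l : ℝ) / b| ≤ Real.sqrt d + 1 / 2 := by
    intro l
    have h1 : |(a l : ℝ) / b| ≤ |w l.succ / w 0| + ε := by
      have := ha l
      have h2 : |(a l : ℝ)/b| - |w l.succ / w 0| ≤ |w l.succ / w 0 - (a l : ℝ)/b| := by
        rw [abs_sub_comm]
        exact abs_sub_abs_le_abs_sub _ _
      linarith
    have h3 : |w l.succ / w 0| ≤ Real.sqrt d := by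
      rw [abs_div]
      calc |w l.succ| / |w 0| ≤ 1 / |w 0| := by gcongr; exact hwi _
          _ = |w 0|⁻¹ := one_div _
          _ ≤ Real.sqrt d := hinvw0
    linarith
  have hwq : ∀ l : Fin d, |w l.succ - w 0 * ((a l : ℝ) / b)| ≤ ε := by
    intro l
    have hid : w l.succ - w 0 * ((a l : ℝ)/b) = w 0 * (w l.succ / w 0 - (a l : ℝ)/b) := by
      field_simp
    rw [hid, abs_mul]

    calc |w 0| * |w l.succ / w 0 - (a l : ℝ)/b| ≤ 1 * ε := by
          apply mul_le_mul (hwi 0) (ha l) (abs_nonneg _) zero_le_one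
      _ = ε := one_mul _
  -- the image direction vector U
  set U : Fin (d + 1) → ℝ := zr (f (glSeg x y 1)) with hU
  have hfz0 : zr (f (glSeg x y 0)) = 0 := by
    rw [h0]; funext i; simp [zr]
  rw [hfz0, sub_zero] at hzi
  set n : ℝ := euclNorm U with hn
  have hn_le : n ≤ M * m := by
    have := hf (glSeg x y 1) (glSeg x y 0)
    rw [hfz0, sub_zero] at this
    exact this
  have hn0 : 0 ≤ n := euclNorm_nonneg _
  have hn_pos : 0 < n := by
    rcases hn0.lt_or_eq with h | h
    · exact h
    · exfalso
      rw [← h] at hzi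
      have : (0:ℝ)⁻¹ • U - w = -w := by simp
      rw [this, euclNorm_neg, hw] at hzi
      linarith
  have hUw : ∀ i, |U i - n * w i| ≤ n * ε := by
    intro i
    have h1 : |((euclNorm U)⁻¹ • U - w) i| ≤ euclNorm ((euclNorm U)⁻¹ • U - w) :=
      euclNorm_coord _ i
    have h2 : |n⁻¹ * U i - w i| < ε := by
      have : ((euclNorm U)⁻¹ • U - w) i = n⁻¹ * U i - w i := by
        simp [Pi.sub_apply, Pi.smul_apply, smul_eq_mul, hn]
      rw [this] at h1
      exact lt_of_le_of_lt h1 hzi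
    have h3 : U i - n * w i = n * (n⁻¹ * U i - w i) := by
      field_simp
    rw [h3, abs_mul, abs_of_pos hn_pos]
    exact le_of_lt (mul_lt_mul_of_pos_left h2 hn_pos)
  have hUq : ∀ l : Fin d, |U l.succ - U 0 * ((a l : ℝ)/b)| ≤ (7/2) * Real.sqrt d * (n * ε) := by
    intro l
    set q : ℝ := (a l : ℝ)/b with hqdef
    have hidq : U l.succ - U 0 * q =
        (U l.succ - n * w l.succ) - (U 0 - n * w 0) * q + n * (w l.succ - w 0 * q) := by ring
    rw [hidq]
    have e1 : |U l.succ - n * w l.succ| ≤ n * ε := hUw _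
    have e2 : |(U 0 - n * w 0) * q| ≤ (n * ε) * (Real.sqrt d + 1/2) := by
      rw [abs_mul]
      exact mul_le_mul (hUw 0) (hq l) (abs_nonneg _) (by positivity)
    have e3 : |n * (w l.succ - w 0 * q)| ≤ n * ε := by
      rw [abs_mul, abs_of_pos hn_pos]
      exact mul_le_mul_of_nonneg_left (hwq l) hn0
    calc |(U l.succ - n * w l.succ) - (U 0 - n * w 0) * q + n * (w l.succ - w 0 * q)|
        ≤ |(U l.succ - n * w l.succ) - (U 0 - n * w 0) * q| + |n * (w l.succ - w 0 * q)| :=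
          abs_add_le _ _
      _ ≤ |U l.succ - n * w l.succ| + |(U 0 - n * w 0) * q| + |n * (w l.succ - w 0 * q)| := by
          linarith [abs_sub (U l.succ - n * w l.succ) ((U 0 - n * w 0) * q)]
      _ ≤ (n * ε) + (n * ε) * (Real.sqrt d + 1/2) + (n * ε) := by linarith
      _ ≤ (7/2) * Real.sqrt d * (n * ε) := by nlinarith [mul_nonneg hn0 hε0.le, hsd1]
  -- the radius bound
  set Rb : ℝ := 9 * Real.sqrt d * M * (ε * m) with hRb
  have hRb0 : 0 < Rb := by positivity
  -- key coordinate estimate on the cylinder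
  have hcoord : ∀ z ∈ cylZ x y (ε * m), ∀ l : Fin d, |pr (zr (f z)) l| ≤ Rb := by
    intro z hz l
    obtain ⟨t, ht, hzdist⟩ := hz
    set q : ℝ := (a l : ℝ)/b with hqdef
    set A : Fin (d + 1) → ℝ := zr (f z) with hA
    have hA1 : euclNorm (A - zr (f (glSeg x y t))) ≤ M * (ε * m) :=
      le_trans (hf z (glSeg x y t)) (mul_le_mul_of_nonneg_left hzdist hM.le)
    have hA2 : euclNorm (zr (f (glSeg x y t)) - t • U) < ε * M * m := by
      have := hzii t ht
      rw [hfz0, smul_zero, zero_add] at this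
      exact this
    have hA3 : euclNorm (A - t • U) ≤ 2 * (ε * M * m) := by
      have hsplit : A - t • U = (A - zr (f (glSeg x y t))) + (zr (f (glSeg x y t)) - t • U) := by
        abel
      rw [hsplit]
      calc euclNorm _ ≤ euclNorm (A - zr (f (glSeg x y t))) +
            euclNorm (zr (f (glSeg x y t)) - t • U) := euclNorm_add_le _ _
        _ ≤ 2 * (ε * M * m) := by nlinarith
    have hVl : ∀ i, |(A - t • U) i| ≤ 2 * (ε * M * m) :=
      fun i => le_trans (euclNorm_coord _ i) hA3
    have ht0 : 0 ≤ t := ht.1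
    have ht1 : t ≤ 1 := ht.2
    have hident : pr A l =
        ((A - t • U) l.succ - (A - t • U) 0 * q) + t * (U l.succ - U 0 * q) := by
      simp only [hpr, Pi.sub_apply, Pi.smul_apply, smul_eq_mul, hqdef]
      ring
    rw [hident]
    have e1 : |(A - t • U) l.succ| ≤ 2 * (ε * M * m) := hVl _
    have e2 : |(A - t • U) 0 * q| ≤ 2 * (ε * M * m) * (Real.sqrt d + 1/2) := by
      rw [abs_mul]
      exact mul_le_mul (hVl 0) (hq l) (abs_nonneg _) (by positivity)
    have e3 : |t * (U l.succ - U 0 * q)| ≤ (7/2) * Real.sqrt d * (n * ε) := by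
      rw [abs_mul]
      calc |t| * |U l.succ - U 0 * q| ≤ 1 * ((7/2) * Real.sqrt d * (n * ε)) := by
            apply mul_le_mul _ (hUq l) (abs_nonneg _) zero_le_one
            rw [abs_of_nonneg ht0]; exact ht1
        _ = (7/2) * Real.sqrt d * (n * ε) := one_mul _
    have e4 : (7/2) * Real.sqrt d * (n * ε) ≤ (7/2) * Real.sqrt d * (M * m * ε) := by
      apply mul_le_mul_of_nonneg_left _ (by positivity)
      exact mul_le_mul_of_nonneg_right hn_le hε0.le
    calc |((A - t • U) l.succ - (A - t • U) 0 * q) + t * (U l.succ - U 0 * q)|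
        ≤ |(A - t • U) l.succ - (A - t • U) 0 * q| + |t * (U l.succ - U 0 * q)| := abs_add_le _ _
      _ ≤ |(A - t • U) l.succ| + |(A - t • U) 0 * q| + |t * (U l.succ - U 0 * q)| := by
          linarith [abs_sub ((A - t • U) l.succ) ((A - t • U) 0 * q)]
      _ ≤ Rb := by rw [hRb]; nlinarith
  -- the finite superset
  set F : Finset (Fin d → ℝ) :=
    (Finset.Ico (0 : ℤ) (b : ℤ)).biUnion (fun r =>
      (Fintype.piFinset (fun l : Fin d =>
        Finset.Icc ⌈(r : ℝ) * (a l : ℝ) / b - Rb⌉ ⌊(r : ℝ) * (a l : ℝ) / b + Rb⌋)).image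
        (fun Q => fun l : Fin d => ((Q l : ℝ) - (r : ℝ) * (a l : ℝ) / b))) with hF
  -- P is contained in F
  set P : Set (Fin d → ℝ) := (fun z => pr (zr (f z))) '' (cylZ x y (ε * m)) with hP
  have hPF : P ⊆ ↑F := by
    rintro v ⟨z, hz, rfl⟩
    have hcz := hcoord z hz
    set r : ℤ := (f z 0) % (b : ℤ) with hr
    set Q : Fin d → ℤ := fun l => f z l.succ - ((f z 0) / (b : ℤ)) * a l with hQ
    have hdm : ((f z 0 : ℤ) : ℝ) = (b : ℝ) * ((f z 0 / (b : ℤ) : ℤ) : ℝ) + ((r : ℤ) : ℝ) := by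
      rw [hr]
      exact_mod_cast congrArg (fun u : ℤ => (u : ℝ)) (Int.mul_ediv_add_emod (f z 0) (b : ℤ)).symm
    have hveq : ∀ l, pr (zr (f z)) l = (Q l : ℝ) - (r : ℝ) * (a l : ℝ) / b := by
      intro l
      simp only [hpr, hQ, zr]
      push_cast
      rw [hdm]
      field_simp
      ring
    simp only [hF, Finset.coe_biUnion, Set.mem_iUnion, Finset.mem_coe, Finset.mem_image]
    refine ⟨r, ?_, Q, ?_, ?_⟩
    · exact Finset.mem_Ico.mpr ⟨Int.emod_nonneg _ (ne_of_gt hbZ), Int.emod_lt_of_pos _ hbZ⟩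
    · rw [Fintype.mem_piFinset]
      intro l
      have h1 := hcz l
      rw [hveq l, abs_le] at h1
      rw [Finset.mem_Icc]
      constructor
      · rw [Int.ceil_le]; linarith [h1.1]
      · rw [Int.le_floor]; linarith [h1.2]
    · funext l
      exact (hveq l).symm
  have hPfin : P.Finite := Set.Finite.subset F.finite_toSet hPF
  -- the set of lines is the image of P under a line-making map
  set Lfun : (Fin d → ℝ) → Set (Fin (d + 1) → ℝ) :=
    fun v => {p | ∃ t : ℝ, p = Fin.cons (0 : ℝ) v - t • sv} with hLfun
  have hline_shift : ∀ (X : Fin (d+1) → ℝ) (c : ℝ),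
      {p : Fin (d+1) → ℝ | ∃ t : ℝ, p = X - t • sv} = {p | ∃ t : ℝ, p = (X - c • sv) - t • sv} := by
    intro X c
    ext p
    constructor
    · rintro ⟨t, rfl⟩
      exact ⟨t - c, by rw [sub_smul]; abel⟩
    · rintro ⟨t, rfl⟩
      exact ⟨t + c, by rw [add_smul]; abel⟩
  have hcons : ∀ X : Fin (d+1) → ℝ, Fin.cons (0 : ℝ) (pr X) = X - (X 0 / b) • sv := by
    intro X
    funext i
    refine Fin.cases ?_ ?_ i
    · simp [hsv, hbne]
    · intro l
      simp only [Fin.cons_succ, hpr, Pi.sub_apply, Pi.smul_apply, smul_eq_mul, hsv]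
      field_simp
  have hLline : ∀ X : Fin (d+1) → ℝ,
      {p : Fin (d+1) → ℝ | ∃ t : ℝ, p = X - t • sv} = Lfun (pr X) := by
    intro X
    rw [hLfun]
    simp only
    rw [hcons X]
    exact hline_shift X (X 0 / b)
  have hSeq : {L : Set (Fin (d + 1) → ℝ) |
      ∃ z ∈ cylZ x y (ε * m),
        L = {p | ∃ t : ℝ, p = zr (f z) - t • sv}} = Lfun '' P := by
    ext L
    constructor
    · rintro ⟨z, hz, rfl⟩
      exact ⟨pr (zr (f z)), ⟨z, hz, rfl⟩, (hLline _).symm⟩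
    · rintro ⟨v, ⟨z, hz, rfl⟩, rfl⟩
      exact ⟨z, hz, (hLline _).symm⟩
  -- counting the finite superset
  have hCm1 : (1:ℝ) ≤ (18 * Real.sqrt d * M + 1) * (ε * m) := by nlinarith
  have hIccR : ∀ c : ℝ, ((Finset.Icc ⌈c - Rb⌉ ⌊c + Rb⌋).card : ℝ) ≤
      (18 * Real.sqrt d * M + 1) * (ε * m) := by
    intro c
    rw [Int.card_Icc]
    rcases le_or_gt (⌊c + Rb⌋ + 1 - ⌈c - Rb⌉) 0 with h | h
    · rw [Int.toNat_of_nonpos h]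
      simpa using le_trans zero_le_one hCm1
    · have hcast : ((⌊c + Rb⌋ + 1 - ⌈c - Rb⌉).toNat : ℝ) = ((⌊c + Rb⌋:ℝ) + 1 - (⌈c - Rb⌉:ℝ)) := by
        rw [← Int.cast_natCast, Int.toNat_of_nonneg h.le]
        push_cast; ring
      rw [hcast]
      have h1 : (⌊c + Rb⌋ : ℝ) ≤ c + Rb := Int.floor_le _
      have h2 : c - Rb ≤ (⌈c - Rb⌉ : ℝ) := Int.le_ceil _
      have h3 : (⌊c + Rb⌋:ℝ) + 1 - (⌈c - Rb⌉:ℝ) ≤ 2 * Rb + 1 := by linarith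
      have h4 : 2 * Rb + 1 ≤ (18 * Real.sqrt d * M + 1) * (ε * m) := by
        rw [hRb]; nlinarith
      linarith
  have hcard2 : ∀ r : ℤ, ((Fintype.piFinset (fun l : Fin d =>
      Finset.Icc ⌈(r : ℝ) * (a l : ℝ) / b - Rb⌉ ⌊(r : ℝ) * (a l : ℝ) / b + Rb⌋)).card : ℝ) ≤
      ((18 * Real.sqrt d * M + 1) * (ε * m)) ^ d := by
    intro r
    rw [Fintype.card_piFinset]
    push_cast
    calc (∏ l : Fin d, ((Finset.Icc ⌈(r : ℝ) * (a l : ℝ) / b - Rb⌉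
            ⌊(r : ℝ) * (a l : ℝ) / b + Rb⌋).card : ℝ))
        ≤ ∏ _l : Fin d, ((18 * Real.sqrt d * M + 1) * (ε * m)) :=
          Finset.prod_le_prod (fun l _ => Nat.cast_nonneg _) (fun l _ => hIccR _)
      _ = ((18 * Real.sqrt d * M + 1) * (ε * m)) ^ d := by
          rw [Finset.prod_const]; simp
  have hFcard : (F.card : ℝ) ≤ (b : ℝ) * ((18 * Real.sqrt d * M + 1) * (ε * m)) ^ d := by
    have h1 : F.card ≤ ∑ r ∈ Finset.Ico (0 : ℤ) (b : ℤ),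
        (Fintype.piFinset (fun l : Fin d =>
          Finset.Icc ⌈(r : ℝ) * (a l : ℝ) / b - Rb⌉ ⌊(r : ℝ) * (a l : ℝ) / b + Rb⌋)).card := by
      refine le_trans Finset.card_biUnion_le (Finset.sum_le_sum fun r _ => Finset.card_image_le)
    have h2 : ((F.card : ℕ) : ℝ) ≤ ∑ r ∈ Finset.Ico (0 : ℤ) (b : ℤ),
        ((Fintype.piFinset (fun l : Fin d =>
          Finset.Icc ⌈(r : ℝ) * (a l : ℝ) / b - Rb⌉ ⌊(r : ℝ) * (a l : ℝ) / b + Rb⌋)).card : ℝ) := by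
      calc ((F.card : ℕ) : ℝ) ≤ _ := Nat.cast_le.mpr h1
        _ = _ := by push_cast; rfl
    calc (F.card : ℝ) ≤ _ := h2
      _ ≤ ∑ _r ∈ Finset.Ico (0 : ℤ) (b : ℤ),
            ((18 * Real.sqrt d * M + 1) * (ε * m)) ^ d :=
          Finset.sum_le_sum fun r _ => hcard2 r
      _ = (b : ℝ) * ((18 * Real.sqrt d * M + 1) * (ε * m)) ^ d := by
          rw [Finset.sum_const, Int.card_Ico]
          simp [nsmul_eq_mul]
  -- putting everything together
  rw [hSeq]
  have hstep1 : ((Lfun '' P).ncard : ℝ) ≤ (P.ncard : ℝ) :=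
    Nat.cast_le.mpr (Set.ncard_image_le hPfin)
  have hstep2 : (P.ncard : ℝ) ≤ (F.card : ℝ) := by
    have := Set.ncard_le_ncard hPF F.finite_toSet
    rw [Set.ncard_coe_finset] at this
    exact_mod_cast this
  have hfinal : (b : ℝ) * ((18 * Real.sqrt d * M + 1) * (ε * m)) ^ d =
      (18 * Real.sqrt d * M + 1) ^ d * m ^ d / ((b : ℝ) ^ (d - 1) * (N : ℝ) ^ d) := by
    rw [hεdef]
    exact pow_algebra _ _ _ _ d hd hbne (ne_of_gt hN0)
  calc ((Lfun '' P).ncard : ℝ) ≤ (P.ncard : ℝ) := hstep1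
    _ ≤ (F.card : ℝ) := hstep2
    _ ≤ (b : ℝ) * ((18 * Real.sqrt d * M + 1) * (ε * m)) ^ d := hFcard
    _ = (18 * Real.sqrt d * M + 1) ^ d * m ^ d / ((b : ℝ) ^ (d - 1) * (N : ℝ) ^ d) := hfinal
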